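/- Let p₁ > 0 and p₂ ≠ 0, and let D, R, I : ℝ → ℝ be differentiable functions satisfying D' = 2I·(p₁D + p₂R), R' = 2I·(-p₂D + p₁R), I' = -2p₁(D² + R²) on ℝ. Set ρ := √(D(0)² + R(0)² + I(0)²) and assume (D(0),R(0),I(0)) ≠ (0,0,ρ) and (D(0),R(0),I(0)) ≠ (0,0,-ρ). Then there exists τ₀ ∈ ℝ with (cos(τ₀ + (p₂/p₁)·log(2ρ)), sin(τ₀ + (p₂/p₁)·log(2ρ))) = (D(0),R(0))/√(D(0)²+R(0)²) such that for all τ ∈ ℝ: D(τ) = ρ·cos(τ₀ + (p₂/p₁)·log((ρ-I(0))·e^{2p₁ρτ} + (ρ+I(0))·e^{-2p₁ρτ})) / cosh(2p₁ρτ - artanh(I(0)/ρ)), R(τ) = ρ·sin(τ₀ + (p₂/p₁)·log((ρ-I(0))·e^{2p₁ρτ} + (ρ+I(0))·e^{-2p₁ρτ})) / cosh(2p₁ρτ - artanh(I(0)/ρ)), and I(τ) = -ρ·tanh(2p₁ρτ - artanh(I(0)/ρ)). -/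

import Mathlib

/-- The real inverse hyperbolic tangent. -/
noncomputable def artanh (x : ℝ) : ℝ := Real.log ((1 + x) / (1 - x)) / 2

lemma tanh_artanh {x : ℝ} (h : |x| < 1) : Real.tanh (artanh x) = x := by
  obtain ⟨h1, h2⟩ := abs_lt.mp h
  have hx1 : 0 < 1 - x := by linarith
  have hx2 : 0 < 1 + x := by linarith
  have he : Real.exp (artanh x) ^ 2 = (1 + x) / (1 - x) := by
    rw [← Real.exp_nat_mul]
    rw [show (2:ℕ) * artanh x = Real.log ((1+x)/(1-x)) by rw [artanh]; ring]
    exact Real.exp_log (div_pos hx2 hx1)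
  have hE := Real.exp_pos (artanh x)
  have key : Real.exp (artanh x) ^ 2 * (1 - x) = 1 + x := by
    rw [he]; field_simp
  have hs : (0:ℝ) < Real.exp (artanh x) + (Real.exp (artanh x))⁻¹ := by positivity
  rw [Real.tanh_eq_sinh_div_cosh, Real.sinh_eq, Real.cosh_eq, Real.exp_neg]
  rw [div_eq_iff (by positivity)]
  field_simp
  nlinarith [key]

lemma abs_le_of_sq_le' {x ρ : ℝ} (h : x ^ 2 ≤ ρ ^ 2) (hρ : 0 ≤ ρ) : |x| ≤ ρ := by
  nlinarith [abs_nonneg x, sq_abs x]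

lemma prod_diff_bound {z x z' x' ρ d : ℝ} (hz : |z| ≤ ρ) (hx' : |x'| ≤ ρ)
    (hdx : |x - x'| ≤ d) (hdz : |z - z'| ≤ d) : |z * x - z' * x'| ≤ 2 * (ρ * d) := by
  have e : z * x - z' * x' = z * (x - x') + x' * (z - z') := by ring
  have hρ0 : (0:ℝ) ≤ ρ := le_trans (abs_nonneg _) hz
  calc |z * x - z' * x'| ≤ |z * (x - x')| + |x' * (z - z')| := e ▸ abs_add_le _ _
    _ = |z| * |x - x'| + |x'| * |z - z'| := by rw [abs_mul, abs_mul]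
    _ ≤ ρ * d + ρ * d := by
        gcongr
    _ = 2 * (ρ * d) := by ring


lemma L_eq (ρ aa ii : ℝ) (hii : ii = ρ * Real.sinh aa / Real.cosh aa) (x : ℝ) :
    (ρ - ii) * Real.exp x + (ρ + ii) * Real.exp (-x)
      = 2 * ρ / Real.cosh aa * Real.cosh (x - aa) := by
  have hca := Real.cosh_pos aa
  have h1 : ρ - ii = ρ / Real.cosh aa * Real.exp (-aa) := by
    rw [hii]; field_simp; linear_combination ρ * Real.cosh_sub_sinh aa
  have h2 : ρ + ii = ρ / Real.cosh aa * Real.exp aa := by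
    rw [hii]; field_simp; linear_combination ρ * Real.cosh_add_sinh aa
  rw [h1, h2]
  simp only [Real.cosh_eq]
  rw [show (-(x - aa)) = aa - x by ring]
  simp only [Real.exp_sub, Real.exp_neg]
  have h3 := Real.exp_ne_zero x
  have h4 := Real.exp_ne_zero aa
  field_simp

lemma Lder_eq (ρ aa ii : ℝ) (hii : ii = ρ * Real.sinh aa / Real.cosh aa) (x : ℝ) :
    (ρ - ii) * Real.exp x - (ρ + ii) * Real.exp (-x)
      = 2 * ρ / Real.cosh aa * Real.sinh (x - aa) := by
  have hca := Real.cosh_pos aa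
  have h1 : ρ - ii = ρ / Real.cosh aa * Real.exp (-aa) := by
    rw [hii]; field_simp; linear_combination ρ * Real.cosh_sub_sinh aa
  have h2 : ρ + ii = ρ / Real.cosh aa * Real.exp aa := by
    rw [hii]; field_simp; linear_combination ρ * Real.cosh_add_sinh aa
  rw [h1, h2]
  simp only [Real.sinh_eq]
  rw [show (-(x - aa)) = aa - x by ring]
  simp only [Real.exp_sub, Real.exp_neg]
  have h3 := Real.exp_ne_zero x
  have h4 := Real.exp_ne_zero aa
  field_simp

noncomputable def Lfun (p₁ ρ ii : ℝ) (τ : ℝ) : ℝ :=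
  (ρ - ii) * Real.exp (2 * p₁ * ρ * τ) + (ρ + ii) * Real.exp (-(2 * p₁ * ρ * τ))

noncomputable def fF (p₁ p₂ ρ aa ii τ₀ : ℝ) (τ : ℝ) : ℝ :=
  ρ * Real.cos (τ₀ + p₂ / p₁ * Real.log (Lfun p₁ ρ ii τ)) / Real.cosh (2 * p₁ * ρ * τ - aa)

noncomputable def gF (p₁ p₂ ρ aa ii τ₀ : ℝ) (τ : ℝ) : ℝ :=
  ρ * Real.sin (τ₀ + p₂ / p₁ * Real.log (Lfun p₁ ρ ii τ)) / Real.cosh (2 * p₁ * ρ * τ - aa)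

noncomputable def hF (p₁ ρ aa : ℝ) (τ : ℝ) : ℝ := -ρ * Real.tanh (2 * p₁ * ρ * τ - aa)

lemma Lfun_pos (p₁ p₂ ρ aa ii : ℝ) (hρ : 0 < ρ)
    (hii : ii = ρ * Real.sinh aa / Real.cosh aa) (τ : ℝ) : 0 < Lfun p₁ ρ ii τ := by
  rw [Lfun, L_eq ρ aa ii hii]
  exact mul_pos (div_pos (by linarith) (Real.cosh_pos aa)) (Real.cosh_pos _)

lemma sq_sum (p₁ p₂ ρ aa ii τ₀ : ℝ) (τ : ℝ) :
    fF p₁ p₂ ρ aa ii τ₀ τ ^ 2 + gF p₁ p₂ ρ aa ii τ₀ τ ^ 2 + hF p₁ ρ aa τ ^ 2 = ρ ^ 2 := by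
  rw [fF, gF, hF, Real.tanh_eq_sinh_div_cosh]
  have hc := (Real.cosh_pos (2 * p₁ * ρ * τ - aa)).ne'
  field_simp
  linear_combination ρ ^ 2 * Real.sin_sq_add_cos_sq (τ₀ + p₂ * Real.log (Lfun p₁ ρ ii τ) / p₁)
    - ρ ^ 2 * Real.cosh_sq (ρ * p₁ * 2 * τ - aa)

lemma hasDerivAt_L (p₁ ρ ii : ℝ) (τ : ℝ) :
    HasDerivAt (Lfun p₁ ρ ii)
      ((ρ - ii) * Real.exp (2 * p₁ * ρ * τ) * (2 * p₁ * ρ)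
        - (ρ + ii) * Real.exp (-(2 * p₁ * ρ * τ)) * (2 * p₁ * ρ)) τ := by
  have hk : HasDerivAt (fun τ : ℝ => 2 * p₁ * ρ * τ) (2 * p₁ * ρ) τ := by
    simpa using (hasDerivAt_id τ).const_mul (2 * p₁ * ρ)
  have h2 := (hk.exp).const_mul (ρ - ii)
  have h3 := ((hk.neg).exp).const_mul (ρ + ii)
  have := h2.add h3
  refine this.congr_deriv ?_
  simp only [Pi.neg_apply]
  ring

lemma hasDerivAt_phi (p₁ p₂ ρ aa ii τ₀ : ℝ) (hp₁ : 0 < p₁) (hρ : 0 < ρ)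
    (hii : ii = ρ * Real.sinh aa / Real.cosh aa) (τ : ℝ) :
    HasDerivAt (fun τ => τ₀ + p₂ / p₁ * Real.log (Lfun p₁ ρ ii τ))
      (2 * p₂ * ρ * Real.sinh (2 * p₁ * ρ * τ - aa) / Real.cosh (2 * p₁ * ρ * τ - aa)) τ := by
  have hL := (hasDerivAt_L p₁ ρ ii τ).log (Lfun_pos p₁ p₂ ρ aa ii hρ hii τ).ne'
  have := (hL.const_mul (p₂ / p₁)).const_add τ₀
  refine this.congr_deriv ?_
  have e1 : Lfun p₁ ρ ii τ = 2 * ρ / Real.cosh aa * Real.cosh (2 * p₁ * ρ * τ - aa) := by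
    rw [Lfun, L_eq ρ aa ii hii]
  have e2 : (ρ - ii) * Real.exp (2 * p₁ * ρ * τ) * (2 * p₁ * ρ)
        - (ρ + ii) * Real.exp (-(2 * p₁ * ρ * τ)) * (2 * p₁ * ρ)
      = 2 * ρ / Real.cosh aa * Real.sinh (2 * p₁ * ρ * τ - aa) * (2 * p₁ * ρ) := by
    rw [← Lder_eq ρ aa ii hii]; ring
  rw [e1, e2]
  have hc := (Real.cosh_pos (2 * p₁ * ρ * τ - aa)).ne'
  have hca := (Real.cosh_pos aa).ne'
  field_simp

lemma hasDerivAt_theta (p₁ ρ aa : ℝ) (τ : ℝ) :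
    HasDerivAt (fun τ : ℝ => 2 * p₁ * ρ * τ - aa) (2 * p₁ * ρ) τ := by
  have hk : HasDerivAt (fun τ : ℝ => 2 * p₁ * ρ * τ) (2 * p₁ * ρ) τ := by
    simpa using (hasDerivAt_id τ).const_mul (2 * p₁ * ρ)
  exact hk.sub_const aa

lemma hasDerivAt_fF (p₁ p₂ ρ aa ii τ₀ : ℝ) (hp₁ : 0 < p₁) (hρ : 0 < ρ)
    (hii : ii = ρ * Real.sinh aa / Real.cosh aa) (τ : ℝ) :
    HasDerivAt (fF p₁ p₂ ρ aa ii τ₀)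
      (2 * hF p₁ ρ aa τ * (p₁ * fF p₁ p₂ ρ aa ii τ₀ τ + p₂ * gF p₁ p₂ ρ aa ii τ₀ τ)) τ := by
  have hφ := hasDerivAt_phi p₁ p₂ ρ aa ii τ₀ hp₁ hρ hii τ
  have hθ := hasDerivAt_theta p₁ ρ aa τ
  have hnum := (hφ.cos).const_mul ρ
  have hden := hθ.cosh
  have hder := hnum.div hden (Real.cosh_pos _).ne'
  refine hder.congr_deriv ?_
  rw [hF, fF, gF, Real.tanh_eq_sinh_div_cosh]
  have hc := (Real.cosh_pos (2 * p₁ * ρ * τ - aa)).ne'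
  field_simp
  ring

lemma hasDerivAt_gF (p₁ p₂ ρ aa ii τ₀ : ℝ) (hp₁ : 0 < p₁) (hρ : 0 < ρ)
    (hii : ii = ρ * Real.sinh aa / Real.cosh aa) (τ : ℝ) :
    HasDerivAt (gF p₁ p₂ ρ aa ii τ₀)
      (2 * hF p₁ ρ aa τ * (-(p₂ * fF p₁ p₂ ρ aa ii τ₀ τ) + p₁ * gF p₁ p₂ ρ aa ii τ₀ τ)) τ := by
  have hφ := hasDerivAt_phi p₁ p₂ ρ aa ii τ₀ hp₁ hρ hii τ
  have hθ := hasDerivAt_theta p₁ ρ aa τ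
  have hnum := (hφ.sin).const_mul ρ
  have hden := hθ.cosh
  have hder := hnum.div hden (Real.cosh_pos _).ne'
  refine hder.congr_deriv ?_
  rw [hF, fF, gF, Real.tanh_eq_sinh_div_cosh]
  have hc := (Real.cosh_pos (2 * p₁ * ρ * τ - aa)).ne'
  field_simp
  ring

lemma hasDerivAt_hF (p₁ p₂ ρ aa ii τ₀ : ℝ) (hp₁ : 0 < p₁) (hρ : 0 < ρ) (τ : ℝ) :
    HasDerivAt (hF p₁ ρ aa)
      (-(2 * p₁ * (fF p₁ p₂ ρ aa ii τ₀ τ ^ 2 + gF p₁ p₂ ρ aa ii τ₀ τ ^ 2))) τ := by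
  have hθ := hasDerivAt_theta p₁ ρ aa τ
  have heq : hF p₁ ρ aa = fun τ =>
      -ρ * (Real.sinh (2 * p₁ * ρ * τ - aa) / Real.cosh (2 * p₁ * ρ * τ - aa)) := by
    funext t; rw [hF, Real.tanh_eq_sinh_div_cosh]
  rw [heq]
  have hder := ((hθ.sinh).div (hθ.cosh) (Real.cosh_pos _).ne').const_mul (-ρ)
  refine hder.congr_deriv ?_
  rw [fF, gF]
  have hc := (Real.cosh_pos (2 * p₁ * ρ * τ - aa)).ne'
  have hcs := Real.cosh_sq (2 * p₁ * ρ * τ - aa)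
  set A := τ₀ + p₂ / p₁ * Real.log (Lfun p₁ ρ ii τ) with hA
  have hsc := Real.sin_sq_add_cos_sq A
  field_simp
  linear_combination hsc - Real.cosh_sq (ρ * 2 * p₁ * τ - aa)

noncomputable def vf (p₁ p₂ : ℝ) (p : ℝ × ℝ × ℝ) : ℝ × ℝ × ℝ :=
  (2 * p.2.2 * (p₁ * p.1 + p₂ * p.2.1), 2 * p.2.2 * (-(p₂ * p.1) + p₁ * p.2.1),
    -(2 * p₁ * (p.1 ^ 2 + p.2.1 ^ 2)))

lemma mem_ball_of_sq {x y z ρ : ℝ} (h : x ^ 2 + y ^ 2 + z ^ 2 = ρ ^ 2) (hρ : 0 ≤ ρ) :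
    ((x, y, z) : ℝ × ℝ × ℝ) ∈ Metric.closedBall (0 : ℝ × ℝ × ℝ) ρ := by
  have hx : |x| ≤ ρ := abs_le_of_sq_le' (by nlinarith [sq_nonneg y, sq_nonneg z]) hρ
  have hy : |y| ≤ ρ := abs_le_of_sq_le' (by nlinarith [sq_nonneg x, sq_nonneg z]) hρ
  have hz : |z| ≤ ρ := abs_le_of_sq_le' (by nlinarith [sq_nonneg x, sq_nonneg y]) hρ
  simp only [Metric.mem_closedBall, Prod.dist_eq, Prod.fst_zero, Prod.snd_zero,
    Real.dist_eq, sub_zero, max_le_iff]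
  exact ⟨hx, hy, hz⟩

lemma vf_lipschitz (p₁ p₂ ρ : ℝ) (hp₁ : 0 < p₁) (hρ : 0 ≤ ρ) :
    LipschitzOnWith (8 * (p₁ + |p₂|) * ρ).toNNReal (vf p₁ p₂)
      (Metric.closedBall (0 : ℝ × ℝ × ℝ) ρ) := by
  rw [lipschitzOnWith_iff_dist_le_mul]
  intro p hp q hq
  rw [Real.coe_toNNReal _ (by positivity)]
  obtain ⟨x, y, z⟩ := p
  obtain ⟨x', y', z'⟩ := q
  simp only [Metric.mem_closedBall, Prod.dist_eq, Prod.fst_zero, Prod.snd_zero,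
    Real.dist_eq, sub_zero, max_le_iff] at hp hq
  obtain ⟨hx, hy, hz⟩ := hp
  obtain ⟨hx', hy', hz'⟩ := hq
  set d : ℝ := dist ((x, y, z) : ℝ × ℝ × ℝ) ((x', y', z') : ℝ × ℝ × ℝ) with hd
  have hdx : |x - x'| ≤ d := le_max_left _ _
  have hdy : |y - y'| ≤ d := le_trans (le_max_left _ _) (le_max_right _ _)
  have hdz : |z - z'| ≤ d := le_trans (le_max_right _ _) (le_max_right _ _)
  have hd0 : 0 ≤ d := dist_nonneg
  have hzx := prod_diff_bound hz hx' hdx hdz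
  have hzy := prod_diff_bound hz hy' hdy hdz
  have hxx := prod_diff_bound hx hx' hdx hdx
  have hyy := prod_diff_bound hy hy' hdy hdy
  have hp2 : (0:ℝ) ≤ |p₂| := abs_nonneg _
  have c1 : |2 * z * (p₁ * x + p₂ * y) - 2 * z' * (p₁ * x' + p₂ * y')|
      ≤ 8 * (p₁ + |p₂|) * ρ * d := by
    have e : 2 * z * (p₁ * x + p₂ * y) - 2 * z' * (p₁ * x' + p₂ * y')
        = 2 * p₁ * (z * x - z' * x') + 2 * p₂ * (z * y - z' * y') := by ring
    calc |2 * z * (p₁ * x + p₂ * y) - 2 * z' * (p₁ * x' + p₂ * y')|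
        ≤ |2 * p₁ * (z * x - z' * x')| + |2 * p₂ * (z * y - z' * y')| := e ▸ abs_add_le _ _
      _ = 2 * p₁ * |z * x - z' * x'| + 2 * |p₂| * |z * y - z' * y'| := by
          simp [abs_mul, abs_two, abs_of_pos hp₁]
      _ ≤ 8 * (p₁ + |p₂|) * ρ * d := by nlinarith [abs_nonneg (z*y - z'*y'), abs_nonneg (z*x - z'*x')]
  have c2 : |2 * z * (-(p₂ * x) + p₁ * y) - 2 * z' * (-(p₂ * x') + p₁ * y')|
      ≤ 8 * (p₁ + |p₂|) * ρ * d := by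
    have e : 2 * z * (-(p₂ * x) + p₁ * y) - 2 * z' * (-(p₂ * x') + p₁ * y')
        = 2 * p₁ * (z * y - z' * y') + (-(2 * p₂)) * (z * x - z' * x') := by ring
    calc |2 * z * (-(p₂ * x) + p₁ * y) - 2 * z' * (-(p₂ * x') + p₁ * y')|
        ≤ |2 * p₁ * (z * y - z' * y')| + |(-(2 * p₂)) * (z * x - z' * x')| := e ▸ abs_add_le _ _
      _ = 2 * p₁ * |z * y - z' * y'| + 2 * |p₂| * |z * x - z' * x'| := by
          simp [abs_mul, abs_two, abs_of_pos hp₁]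
      _ ≤ 8 * (p₁ + |p₂|) * ρ * d := by nlinarith [abs_nonneg (z*y - z'*y'), abs_nonneg (z*x - z'*x')]
  have c3 : |(-(2 * p₁ * (x ^ 2 + y ^ 2))) - (-(2 * p₁ * (x' ^ 2 + y' ^ 2)))|
      ≤ 8 * (p₁ + |p₂|) * ρ * d := by
    have e : (-(2 * p₁ * (x ^ 2 + y ^ 2))) - (-(2 * p₁ * (x' ^ 2 + y' ^ 2)))
        = (-(2 * p₁)) * (x * x - x' * x') + (-(2 * p₁)) * (y * y - y' * y') := by ring
    calc |(-(2 * p₁ * (x ^ 2 + y ^ 2))) - (-(2 * p₁ * (x' ^ 2 + y' ^ 2)))|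
        ≤ |(-(2 * p₁)) * (x * x - x' * x')| + |(-(2 * p₁)) * (y * y - y' * y')| := e ▸ abs_add_le _ _
      _ = 2 * p₁ * |x * x - x' * x'| + 2 * p₁ * |y * y - y' * y'| := by
          simp [abs_mul, abs_two, abs_of_pos hp₁]
      _ ≤ 8 * (p₁ + |p₂|) * ρ * d := by nlinarith [abs_nonneg (x*x - x'*x'), abs_nonneg (y*y - y'*y')]
  show max _ (max _ _) ≤ _
  exact max_le c1 (max_le c2 c3)



/-- Case 5 (combination of p₁- and p₂-components) of the quadratic system:
explicit solution. -/
theorem stmt_3 (p₁ p₂ : ℝ) (hp₁ : 0 < p₁) (hp₂ : p₂ ≠ 0) (D R I : ℝ → ℝ)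
    (hD : ∀ τ, HasDerivAt D (2 * I τ * (p₁ * D τ + p₂ * R τ)) τ)
    (hR : ∀ τ, HasDerivAt R (2 * I τ * (-(p₂ * D τ) + p₁ * R τ)) τ)
    (hI : ∀ τ, HasDerivAt I (-(2 * p₁ * (D τ ^ 2 + R τ ^ 2))) τ)
    (ρ : ℝ) (hρ : ρ = Real.sqrt (D 0 ^ 2 + R 0 ^ 2 + I 0 ^ 2))
    (hne₁ : (D 0, R 0, I 0) ≠ (0, 0, ρ))
    (hne₂ : (D 0, R 0, I 0) ≠ (0, 0, -ρ)) :
    ∃ τ₀ : ℝ,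
      Real.cos (τ₀ + p₂ / p₁ * Real.log (2 * ρ)) = D 0 / Real.sqrt (D 0 ^ 2 + R 0 ^ 2) ∧
      Real.sin (τ₀ + p₂ / p₁ * Real.log (2 * ρ)) = R 0 / Real.sqrt (D 0 ^ 2 + R 0 ^ 2) ∧
      ∀ τ : ℝ,
        D τ = ρ * Real.cos (τ₀ + p₂ / p₁ *
                Real.log ((ρ - I 0) * Real.exp (2 * p₁ * ρ * τ)
                          + (ρ + I 0) * Real.exp (-(2 * p₁ * ρ * τ))))
              / Real.cosh (2 * p₁ * ρ * τ - artanh (I 0 / ρ)) ∧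
        R τ = ρ * Real.sin (τ₀ + p₂ / p₁ *
                Real.log ((ρ - I 0) * Real.exp (2 * p₁ * ρ * τ)
                          + (ρ + I 0) * Real.exp (-(2 * p₁ * ρ * τ))))
              / Real.cosh (2 * p₁ * ρ * τ - artanh (I 0 / ρ)) ∧
        I τ = -ρ * Real.tanh (2 * p₁ * ρ * τ - artanh (I 0 / ρ)) := by
  have hρ0 : 0 ≤ ρ := hρ ▸ Real.sqrt_nonneg _
  -- conserved quantity
  have hSd : ∀ τ, HasDerivAt (fun τ => D τ ^ 2 + R τ ^ 2 + I τ ^ 2) 0 τ := by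
    intro τ
    have h := (((hD τ).pow 2).add ((hR τ).pow 2)).add ((hI τ).pow 2)
    refine h.congr_deriv ?_
    push_cast
    ring
  have hS : ∀ τ, D τ ^ 2 + R τ ^ 2 + I τ ^ 2 = ρ ^ 2 := by
    intro τ
    have hconst := is_const_of_deriv_eq_zero (f := fun τ => D τ ^ 2 + R τ ^ 2 + I τ ^ 2)
      (fun t => (hSd t).differentiableAt) (fun t => (hSd t).deriv) τ 0
    have h0 : D 0 ^ 2 + R 0 ^ 2 + I 0 ^ 2 = ρ ^ 2 := by
      rw [hρ, Real.sq_sqrt (by positivity)]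
    simpa [h0] using hconst
  have hρpos : 0 < ρ := by
    rcases eq_or_lt_of_le hρ0 with h | h
    · exfalso
      apply hne₁
      have h0 := hS 0
      rw [← h] at h0
      have h3 : D 0 = 0 ∧ R 0 = 0 ∧ I 0 = 0 := by
        refine ⟨?_, ?_, ?_⟩ <;> nlinarith [sq_nonneg (D 0), sq_nonneg (R 0), sq_nonneg (I 0)]
      simp [h3.1, h3.2.1, h3.2.2, ← h]
    · exact h
  have hI0 : |I 0| < ρ := by
    have habs : |I 0| ≤ ρ := abs_le_of_sq_le'
      (by nlinarith [hS 0, sq_nonneg (D 0), sq_nonneg (R 0)]) hρ0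
    rcases lt_or_eq_of_le habs with h | h
    · exact h
    exfalso
    have hD0 : D 0 = 0 := by nlinarith [hS 0, sq_abs (I 0), sq_nonneg (R 0)]
    have hR0 : R 0 = 0 := by nlinarith [hS 0, sq_abs (I 0), sq_nonneg (D 0)]
    rcases (abs_eq hρ0).mp h with h' | h'
    · exact hne₁ (by simp [hD0, hR0, h'])
    · exact hne₂ (by simp [hD0, hR0, h'])
  have hr0pos : 0 < Real.sqrt (D 0 ^ 2 + R 0 ^ 2) := by
    apply Real.sqrt_pos.mpr
    nlinarith [hS 0, sq_abs (I 0), mul_self_lt_mul_self (abs_nonneg (I 0)) hI0]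
  have hr0sq : Real.sqrt (D 0 ^ 2 + R 0 ^ 2) ^ 2 = ρ ^ 2 - I 0 ^ 2 := by
    rw [Real.sq_sqrt (by positivity)]
    nlinarith [hS 0]
  set r0 := Real.sqrt (D 0 ^ 2 + R 0 ^ 2) with hr0def
  -- the inverse hyperbolic tangent
  have htanh : Real.tanh (artanh (I 0 / ρ)) = I 0 / ρ := by
    apply tanh_artanh
    rw [abs_div, abs_of_pos hρpos]
    exact (div_lt_one hρpos).mpr hI0
  set a := artanh (I 0 / ρ) with hadef
  have hsinh : Real.sinh a = I 0 / ρ * Real.cosh a := by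
    rw [← htanh, Real.tanh_eq_sinh_div_cosh]
    field_simp
  have hii : I 0 = ρ * Real.sinh a / Real.cosh a := by
    rw [hsinh]
    field_simp
  have hsq : Real.cosh a ^ 2 * (ρ ^ 2 - I 0 ^ 2) = ρ ^ 2 := by
    have hc := Real.cosh_sq_sub_sinh_sq a
    have h2 : Real.sinh a ^ 2 * ρ ^ 2 = I 0 ^ 2 * Real.cosh a ^ 2 := by
      rw [hsinh]
      field_simp
    linear_combination ρ ^ 2 * hc + h2
  have hcosha : Real.cosh a = ρ / r0 := by
    have key2 : (Real.cosh a * r0) ^ 2 = ρ ^ 2 := by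
      rw [mul_pow, hr0sq]
      linear_combination hsq
    have h4 : (Real.cosh a * r0 - ρ) * (Real.cosh a * r0 + ρ) = 0 := by
      linear_combination key2
    rcases mul_eq_zero.mp h4 with h5 | h5
    · rw [eq_div_iff hr0pos.ne']
      linarith
    · nlinarith [Real.cosh_pos a, hr0pos]
  -- the initial angle
  set z : ℂ := ⟨D 0, R 0⟩ with hzdef
  have hzne : z ≠ 0 := by
    intro h0
    rw [Complex.ext_iff] at h0
    simp only [Complex.zero_re, Complex.zero_im] at h0
    have := hr0pos
    rw [hr0def] at this
    rw [show D 0 = z.re from rfl, show R 0 = z.im from rfl, h0.1, h0.2] at this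
    simp at this
  have habsz : ‖z‖ = r0 := by
    rw [Complex.norm_def, Complex.normSq_mk, hr0def]
    congr 1
    ring
  have hb1 : Real.cos (Complex.arg z) = D 0 / r0 := by
    rw [Complex.cos_arg hzne, habsz]
  have hb2 : Real.sin (Complex.arg z) = R 0 / r0 := by
    rw [Complex.sin_arg, habsz]
  refine ⟨Complex.arg z - p₂ / p₁ * Real.log (2 * ρ), ?_, ?_, ?_⟩
  · rw [show Complex.arg z - p₂ / p₁ * Real.log (2 * ρ) + p₂ / p₁ * Real.log (2 * ρ)
      = Complex.arg z by ring, hb1]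
  · rw [show Complex.arg z - p₂ / p₁ * Real.log (2 * ρ) + p₂ / p₁ * Real.log (2 * ρ)
      = Complex.arg z by ring, hb2]
  set τ₀ := Complex.arg z - p₂ / p₁ * Real.log (2 * ρ) with hτ₀def
  have hang : τ₀ + p₂ / p₁ * Real.log (2 * ρ) = Complex.arg z := by ring
  -- uniqueness of solutions
  have hUder : ∀ t, HasDerivAt (fun t => ((D t, R t, I t) : ℝ × ℝ × ℝ))
      (vf p₁ p₂ (D t, R t, I t)) t := fun t => (hD t).prodMk ((hR t).prodMk (hI t))
  have hWder : ∀ t, HasDerivAt (fun t => ((fF p₁ p₂ ρ a (I 0) τ₀ t, gF p₁ p₂ ρ a (I 0) τ₀ t,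
        hF p₁ ρ a t) : ℝ × ℝ × ℝ))
      (vf p₁ p₂ (fF p₁ p₂ ρ a (I 0) τ₀ t, gF p₁ p₂ ρ a (I 0) τ₀ t, hF p₁ ρ a t)) t :=
    fun t => (hasDerivAt_fF p₁ p₂ ρ a (I 0) τ₀ hp₁ hρpos hii t).prodMk
      ((hasDerivAt_gF p₁ p₂ ρ a (I 0) τ₀ hp₁ hρpos hii t).prodMk
        (hasDerivAt_hF p₁ p₂ ρ a (I 0) τ₀ hp₁ hρpos t))
  have hUmem : ∀ t, ((D t, R t, I t) : ℝ × ℝ × ℝ) ∈ Metric.closedBall (0 : ℝ × ℝ × ℝ) ρ :=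
    fun t => mem_ball_of_sq (hS t) hρ0
  have hWmem : ∀ t, ((fF p₁ p₂ ρ a (I 0) τ₀ t, gF p₁ p₂ ρ a (I 0) τ₀ t, hF p₁ ρ a t) : ℝ × ℝ × ℝ)
      ∈ Metric.closedBall (0 : ℝ × ℝ × ℝ) ρ :=
    fun t => mem_ball_of_sq (sq_sum p₁ p₂ ρ a (I 0) τ₀ t) hρ0
  have hL0 : Lfun p₁ ρ (I 0) 0 = 2 * ρ := by
    rw [Lfun]
    norm_num
    ring
  have hinit : ((D 0, R 0, I 0) : ℝ × ℝ × ℝ)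
      = (fF p₁ p₂ ρ a (I 0) τ₀ 0, gF p₁ p₂ ρ a (I 0) τ₀ 0, hF p₁ ρ a 0) := by
    have e1 : fF p₁ p₂ ρ a (I 0) τ₀ 0 = D 0 := by
      rw [fF, hL0, show 2 * p₁ * ρ * 0 - a = -a by ring, Real.cosh_neg, hcosha, hang, hb1]
      field_simp
    have e2 : gF p₁ p₂ ρ a (I 0) τ₀ 0 = R 0 := by
      rw [gF, hL0, show 2 * p₁ * ρ * 0 - a = -a by ring, Real.cosh_neg, hcosha, hang, hb2]
      field_simp
    have e3 : hF p₁ ρ a 0 = I 0 := by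
      rw [hF, show 2 * p₁ * ρ * 0 - a = -a by ring, Real.tanh_neg, htanh]
      field_simp
    rw [e1, e2, e3]
  have key : ∀ t, ((D t, R t, I t) : ℝ × ℝ × ℝ)
      = (fF p₁ p₂ ρ a (I 0) τ₀ t, gF p₁ p₂ ρ a (I 0) τ₀ t, hF p₁ ρ a t) := by
    intro t
    have h01 : (0 : ℝ) ∈ Set.Ioo (-(|t| + 1)) (|t| + 1) := by
      rw [Set.mem_Ioo]
      constructor <;> linarith [abs_nonneg t]
    have ht1 : t ∈ Set.Ioo (-(|t| + 1)) (|t| + 1) := by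
      rw [Set.mem_Ioo]
      constructor
      · linarith [neg_abs_le t]
      · linarith [le_abs_self t]
    exact ODE_solution_unique_of_mem_Ioo (fun _ _ => vf_lipschitz p₁ p₂ ρ hp₁ hρ0) h01
      (fun s _ => ⟨hUder s, hUmem s⟩) (fun s _ => ⟨hWder s, hWmem s⟩) hinit ht1
  intro τ
  have k := key τ
  exact ⟨congrArg Prod.fst k, congrArg (fun p => p.2.1) k, congrArg (fun p => p.2.2) k⟩
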